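/- Let v_n(a) denote the number of Catalan words of length n avoiding the vincular pattern 21-3 whose last letter is a, with v_n(a) = 0 unless n ≥ 1 and 1 ≤ a ≤ n. Then v_1(1) = 1, v_n(1) = Σ_{j=1}^{n−1} v_{n−1}(j) for all n ≥ 2, and for all n ≥ 2 and 2 ≤ a ≤ n: v_n(a) = Σ_{j=a−1}^{n−1} v_{n−1}(j) − Σ_{j=2}^{a−1} Σ_{m=j+1}^{n−a+1} binom(m−2, j−1) · v_{n−m}(a−1), where empty sums are 0 and binom denotes the binomial coefficient. -/

import Mathlib

/-- A Catalan word: a word of positive integers starting with 1 in which each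
letter exceeds its predecessor by at most 1. -/
def IsCatalanWord {n : ℕ} (w : Fin n → ℕ) : Prop :=
  (∀ i, 1 ≤ w i) ∧ (∀ h : 0 < n, w ⟨0, h⟩ = 1) ∧
  ∀ i : ℕ, ∀ h : i + 1 < n, w ⟨i + 1, h⟩ ≤ w ⟨i, by omega⟩ + 1

/-- `w` contains the vincular pattern 21-3: there are indices `i` and `k` with
`i + 1 < k`, `w i > w (i+1)` and `w k > w i`. -/
def Contains21_3 {n : ℕ} (w : Fin n → ℕ) : Prop :=
  ∃ i k : ℕ, ∃ hk : k < n, ∃ hik : i + 1 < k,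
    w ⟨i + 1, by omega⟩ < w ⟨i, by omega⟩ ∧ w ⟨i, by omega⟩ < w ⟨k, hk⟩

/-- `v n a`: the number of Catalan words of length `n` avoiding 21-3 whose last
letter is `a` (zero in degenerate cases). -/
noncomputable def v (n a : ℕ) : ℕ :=
  Set.ncard {w : Fin n → ℕ | IsCatalanWord w ∧ ¬ Contains21_3 w ∧
    ∃ h : 0 < n, w ⟨n - 1, by omega⟩ = a}

open Finset

namespace CW213

lemma wcongr {M : ℕ} (w : Fin M → ℕ) {i j : ℕ} (hi : i < M) (hj : j < M) (h : i = j) :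
    w ⟨i, hi⟩ = w ⟨j, hj⟩ := by subst h; rfl

def Sset (M b : ℕ) : Set (Fin M → ℕ) :=
  {w | IsCatalanWord w ∧ ¬ Contains21_3 w ∧ ∃ h : 0 < M, w ⟨M - 1, by omega⟩ = b}

lemma v_eq (M b : ℕ) : v M b = (Sset M b).ncard := rfl

lemma catalan_bound {M : ℕ} {w : Fin M → ℕ} (hw : IsCatalanWord w) :
    ∀ i, ∀ h : i < M, w ⟨i, h⟩ ≤ i + 1 := by
  intro i
  induction i with
  | zero => intro h; rw [hw.2.1 h]
  | succ i ih =>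
    intro h
    have h1 := hw.2.2 i h
    have h2 : w ⟨i, by omega⟩ ≤ i + 1 := ih (by omega)
    omega

lemma finite_aux {M : ℕ} (s : Set (Fin M → ℕ)) (hs : ∀ w ∈ s, IsCatalanWord w) : s.Finite := by
  have h1 : (Set.univ.pi (fun _ : Fin M => Set.Iic M)).Finite :=
    Set.Finite.pi fun _ => Set.finite_Iic M
  refine h1.subset ?_
  intro w hw i _
  have hb := catalan_bound (hs w hw) i.1 i.2
  have : w i = w ⟨i.1, i.2⟩ := rfl
  simp only [Set.mem_Iic]
  omega

lemma Sset_finite (M b : ℕ) : (Sset M b).Finite :=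
  finite_aux _ (fun _ hw => hw.1)

def app {M : ℕ} (b : ℕ) (u : Fin M → ℕ) : Fin (M + 1) → ℕ :=
  fun i => if h : i.1 < M then u ⟨i.1, h⟩ else b

lemma app_lt {M : ℕ} (b : ℕ) (u : Fin M → ℕ) {i : ℕ} (h : i < M) (h' : i < M + 1) :
    app b u ⟨i, h'⟩ = u ⟨i, h⟩ := by simp [app, h]

lemma app_last {M : ℕ} (b : ℕ) (u : Fin M → ℕ) {i : ℕ} (h : ¬ (i < M)) (h' : i < M + 1) :
    app b u ⟨i, h'⟩ = b := by simp [app, h]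

lemma app_injOn {M : ℕ} (b : ℕ) (s : Set (Fin M → ℕ)) : Set.InjOn (app b) s := by
  intro u _ u' _ h
  funext i
  have := congrFun h ⟨i.1, by omega⟩
  rwa [app_lt b u i.2, app_lt b u' i.2] at this

lemma restrict_catalan {M : ℕ} {w : Fin (M + 1) → ℕ} (hw : IsCatalanWord w) (hM : 0 < M) :
    IsCatalanWord (fun i : Fin M => w ⟨i.1, by omega⟩) := by
  refine ⟨fun i => hw.1 _, fun h => hw.2.1 (by omega), fun i h => ?_⟩
  exact hw.2.2 i (by omega)

lemma restrict_avoid {M : ℕ} {w : Fin (M + 1) → ℕ} (hw : ¬ Contains21_3 w) :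
    ¬ Contains21_3 (fun i : Fin M => w ⟨i.1, by omega⟩) := by
  rintro ⟨i, k, hk, hik, h1, h2⟩
  exact hw ⟨i, k, by omega, hik, h1, h2⟩

/-- counting an avoiding-set with lower bound on last letter, fiberwise by last letter -/
lemma ncard_lastbound (M c : ℕ) (hM : 0 < M) (hc : 1 ≤ c) :
    {u : Fin M → ℕ | (IsCatalanWord u ∧ ¬ Contains21_3 u) ∧ c ≤ u ⟨M - 1, by omega⟩}.ncard
      = ∑ j ∈ Icc c M, v M j := by
  classical
  set B : Set (Fin M → ℕ) :=
    {u : Fin M → ℕ | (IsCatalanWord u ∧ ¬ Contains21_3 u) ∧ c ≤ u ⟨M - 1, by omega⟩} with hB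
  have hfin : B.Finite := finite_aux _ (fun _ hw => hw.1.1)
  rw [Set.ncard_eq_toFinset_card B hfin]
  have hmem : ∀ u ∈ hfin.toFinset, (fun u : Fin M → ℕ => u ⟨M - 1, by omega⟩) u ∈ Icc c M := by
    intro u hu
    rw [Set.Finite.mem_toFinset] at hu
    simp only [hB, Set.mem_setOf_eq] at hu
    have hb := catalan_bound hu.1.1 (M - 1) (by omega)
    rw [Finset.mem_Icc]
    show c ≤ u ⟨M - 1, by omega⟩ ∧ u ⟨M - 1, by omega⟩ ≤ M
    exact ⟨hu.2, by omega⟩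
  rw [Finset.card_eq_sum_card_fiberwise hmem]
  refine Finset.sum_congr rfl fun j hj => ?_
  have hcj : c ≤ j := (Finset.mem_Icc.mp hj).1
  have hset : ((hfin.toFinset.filter (fun u : Fin M → ℕ => u ⟨M - 1, by omega⟩ = j)) : Set (Fin M → ℕ))
      = Sset M j := by
    ext u
    simp only [Finset.coe_filter, Set.mem_setOf_eq, Set.Finite.mem_toFinset, hB, Sset]
    constructor
    · rintro ⟨⟨⟨h1, h2⟩, _⟩, h4⟩
      exact ⟨h1, h2, hM, h4⟩
    · rintro ⟨h1, h2, _, h4⟩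
      exact ⟨⟨⟨h1, h2⟩, by omega⟩, h4⟩
  rw [v_eq, ← hset, Set.ncard_coe_finset]

lemma one_le_last {M : ℕ} {u : Fin M → ℕ} (hu : IsCatalanWord u) (h : 0 < M) :
    1 ≤ u ⟨M - 1, by omega⟩ := hu.1 _

/-- Part 2 image lemma -/
lemma part2_image (M : ℕ) (hM : 0 < M) :
    Sset (M + 1) 1
      = app 1 '' {u : Fin M → ℕ | (IsCatalanWord u ∧ ¬ Contains21_3 u) ∧
          1 ≤ u ⟨M - 1, by omega⟩} := by
  ext w
  constructor
  · rintro ⟨hw, hav, h0, hl⟩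
    refine ⟨fun i : Fin M => w ⟨i.1, by omega⟩, ⟨⟨restrict_catalan hw hM, restrict_avoid hav⟩,
      hw.1 _⟩, ?_⟩
    funext i
    by_cases h : i.1 < M
    · rw [show i = ⟨i.1, i.2⟩ from rfl, app_lt 1 _ h]
    · rw [show i = ⟨i.1, i.2⟩ from rfl, app_last 1 _ h]
      have : w ⟨i.1, i.2⟩ = w ⟨M + 1 - 1, by omega⟩ := wcongr w _ _ (by omega)
      omega
  · rintro ⟨u, ⟨⟨hu, hav⟩, -⟩, rfl⟩
    refine ⟨⟨?_, ?_, ?_⟩, ?_, by omega, ?_⟩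
    · intro i
      by_cases h : i.1 < M
      · rw [show i = ⟨i.1, i.2⟩ from rfl, app_lt 1 u h]; exact hu.1 _
      · rw [show i = ⟨i.1, i.2⟩ from rfl, app_last 1 u h]
    · intro h
      rw [app_lt 1 u hM]
      exact hu.2.1 hM
    · intro i h
      by_cases h2 : i + 1 < M
      · rw [app_lt 1 u h2, app_lt 1 u (by omega)]
        exact hu.2.2 i h2
      · rw [app_last 1 u h2]
        omega
    · rintro ⟨i, k, hk, hik, h1, h2⟩
      by_cases hkM : k < M
      · refine hav ⟨i, k, hkM, hik, ?_, ?_⟩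
        · rwa [app_lt 1 u (by omega : i + 1 < M), app_lt 1 u (by omega : i < M)] at h1
        · rwa [app_lt 1 u (by omega : i < M), app_lt 1 u hkM] at h2
      · rw [app_last 1 u hkM] at h2
        rw [app_lt 1 u (by omega : i < M)] at h2
        have := hu.1 ⟨i, by omega⟩
        omega
    · rw [app_last 1 u (by omega : ¬ (M + 1 - 1 < M))]

lemma main_part2 (M : ℕ) (hM : 1 ≤ M) : v (M + 1) 1 = ∑ j ∈ Icc 1 M, v M j := by
  rw [v_eq]
  show (Sset (M + 1) 1).ncard = _
  rw [part2_image M hM, Set.ncard_image_of_injOn (app_injOn 1 _),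
    ncard_lastbound M 1 hM le_rfl]

lemma main_part1 : v 1 1 = 1 := by
  rw [v_eq]
  have : Sset 1 1 = {fun _ : Fin 1 => 1} := by
    ext w
    constructor
    · rintro ⟨hw, -, -, -⟩
      funext i
      have : i = ⟨0, one_pos⟩ := Subsingleton.elim _ _
      rw [this]
      exact hw.2.1 one_pos
    · rintro rfl
      refine ⟨⟨fun _ => le_rfl, fun _ => rfl, fun i h => by omega⟩, ?_, one_pos, rfl⟩
      rintro ⟨i, k, hk, hik, -, -⟩
      omega
  rw [this, Set.ncard_singleton]


/-! ### Part 3 -/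

def res {M : ℕ} (w : Fin (M + 1) → ℕ) : Fin M → ℕ := fun i => w ⟨i.1, by omega⟩

lemma app_res {M : ℕ} (b : ℕ) (w : Fin (M + 1) → ℕ) (hlast : w ⟨M, by omega⟩ = b) :
    app b (res w) = w := by
  funext i
  by_cases h : i.1 < M
  · rw [show i = ⟨i.1, i.2⟩ from rfl, app_lt b _ h]
    rfl
  · rw [show i = ⟨i.1, i.2⟩ from rfl, app_last b _ h]
    have : w ⟨i.1, i.2⟩ = w ⟨M, by omega⟩ := wcongr w _ _ (by omega)
    omega

lemma restrict_catalan' {M L : ℕ} (hL : 0 < L) (hLM : L ≤ M) {w : Fin M → ℕ}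
    (hw : IsCatalanWord w) : IsCatalanWord (fun i : Fin L => w ⟨i.1, by omega⟩) := by
  refine ⟨fun i => hw.1 _, fun h => hw.2.1 (by omega), fun i h => ?_⟩
  exact hw.2.2 i (by omega)

lemma restrict_avoid' {M L : ℕ} (hLM : L ≤ M) {w : Fin M → ℕ} (hw : ¬ Contains21_3 w) :
    ¬ Contains21_3 (fun i : Fin L => w ⟨i.1, by omega⟩) := by
  rintro ⟨i, k, hk, hik, h1, h2⟩
  exact hw ⟨i, k, by omega, hik, h1, h2⟩

lemma res_catalan {M : ℕ} (hM : 0 < M) {w : Fin (M + 1) → ℕ} (hw : IsCatalanWord w) :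
    IsCatalanWord (res w) := restrict_catalan' (M := M + 1) (L := M) hM (by omega) (w := w) hw

lemma res_avoid {M : ℕ} {w : Fin (M + 1) → ℕ} (hw : ¬ Contains21_3 w) :
    ¬ Contains21_3 (res w) := restrict_avoid' (M := M + 1) (L := M) (by omega) (w := w) hw

/-- no pattern means: after a descent, everything is small -/
lemma avoid_descent_bound {M : ℕ} {u : Fin M → ℕ} (hav : ¬ Contains21_3 u) {p k : ℕ}
    (hp : p + 1 < M) (hd : u ⟨p + 1, hp⟩ < u ⟨p, by omega⟩) (hpk : p + 1 < k) (hk : k < M) :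
    u ⟨k, hk⟩ ≤ u ⟨p, by omega⟩ := by
  by_contra hc
  exact hav ⟨p, k, hk, hpk, hd, by omega⟩

lemma card_filter_lt_succ (S : Finset ℕ) (t : ℕ) :
    (S.filter (· < t + 1)).card = (S.filter (· < t)).card + (if t ∈ S then 1 else 0) := by
  classical
  have h1 : S.filter (· < t + 1) = S.filter (· < t) ∪ S.filter (· = t) := by
    rw [← Finset.filter_or]
    refine Finset.filter_congr fun x _ => ?_
    simp only [Nat.lt_succ_iff_lt_or_eq]
  rw [h1, Finset.card_union_of_disjoint, Finset.filter_eq']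
  · split <;> simp
  · rw [Finset.disjoint_filter]
    intro x _ h1 h2
    omega

lemma card_filter_lt_mono (S : Finset ℕ) (t : ℕ) :
    (S.filter (· < t)).card ≤ (S.filter (· < t + 1)).card := by
  rw [card_filter_lt_succ]; omega

/-- the descent predicate for the fibering -/
def Dsc (M a : ℕ) (u : Fin M → ℕ) (p : ℕ) : Prop :=
  ∃ hp : p + 1 < M, u ⟨p + 1, hp⟩ < u ⟨p, by omega⟩ ∧ u ⟨p, by omega⟩ = a - 1

instance DscDecidable (M a : ℕ) (u : Fin M → ℕ) : DecidablePred (Dsc M a u) := fun p => by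
  unfold Dsc
  by_cases h : p + 1 < M
  · exact decidable_of_iff (u ⟨p + 1, h⟩ < u ⟨p, by omega⟩ ∧ u ⟨p, by omega⟩ = a - 1)
      ⟨fun hh => ⟨h, hh⟩, fun ⟨_, hh⟩ => hh⟩
  · exact isFalse (fun ⟨hp, _⟩ => h hp)

def kp (M a : ℕ) (u : Fin M → ℕ) : ℕ := Nat.findGreatest (Dsc M a u) M

def Bset (M a : ℕ) (hM : 0 < M) : Set (Fin M → ℕ) :=
  {u : Fin M → ℕ | (IsCatalanWord u ∧ ¬ Contains21_3 u) ∧ a - 1 ≤ u ⟨M - 1, by omega⟩}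

def Badset (M a : ℕ) (hM : 0 < M) : Set (Fin M → ℕ) :=
  {u : Fin M → ℕ | u ∈ Bset M a hM ∧ Contains21_3 (app a u)}

lemma contains_app_iff {M a : ℕ} {u : Fin M → ℕ} (hu : ¬ Contains21_3 u) (ha : 1 ≤ a) :
    Contains21_3 (app a u) ↔
      ∃ p, ∃ hp : p + 1 < M, u ⟨p + 1, hp⟩ < u ⟨p, by omega⟩ ∧ u ⟨p, by omega⟩ < a := by
  constructor
  · rintro ⟨i, k, hk, hik, h1, h2⟩
    by_cases hkM : k < M
    · exfalso
      refine hu ⟨i, k, hkM, hik, ?_, ?_⟩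
      · rwa [app_lt a u (by omega : i + 1 < M), app_lt a u (by omega : i < M)] at h1
      · rwa [app_lt a u (by omega : i < M), app_lt a u hkM] at h2
    · rw [app_last a u hkM] at h2
      rw [app_lt a u (by omega : i < M)] at h2
      rw [app_lt a u (by omega : i + 1 < M), app_lt a u (by omega : i < M)] at h1
      exact ⟨i, by omega, h1, h2⟩
  · rintro ⟨p, hp, h1, h2⟩
    refine ⟨p, M, by omega, by omega, ?_, ?_⟩
    · rwa [app_lt a u (by omega : p + 1 < M), app_lt a u (by omega : p < M)]
    · rwa [app_lt a u (by omega : p < M), app_last a u (by omega : ¬ (M < M))]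

/-- characterization of bad words -/
lemma bad_char {M a : ℕ} (hM : 0 < M) (ha2 : 2 ≤ a) {u : Fin M → ℕ} :
    u ∈ Badset M a hM ↔ (IsCatalanWord u ∧ ¬ Contains21_3 u) ∧
      u ⟨M - 1, by omega⟩ = a - 1 ∧ ∃ p, Dsc M a u p := by
  constructor
  · rintro ⟨⟨⟨hcat, hav⟩, hlast⟩, hcon⟩
    rw [contains_app_iff hav (by omega)] at hcon
    obtain ⟨p, hp, h1, h2⟩ := hcon
    have hub : ∀ k, ∀ hk : k < M, p + 1 < k → u ⟨k, hk⟩ ≤ u ⟨p, by omega⟩ :=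
      fun k hk hpk => avoid_descent_bound hav hp h1 hpk hk
    have hne : p + 1 ≠ M - 1 := by
      intro he
      have : u ⟨M - 1, by omega⟩ = u ⟨p + 1, hp⟩ := wcongr u _ _ he.symm
      omega
    have hlb : u ⟨M - 1, by omega⟩ ≤ u ⟨p, by omega⟩ := hub (M - 1) (by omega) (by omega)
    have hl : u ⟨M - 1, by omega⟩ = a - 1 := by omega
    exact ⟨⟨hcat, hav⟩, hl, p, hp, h1, by omega⟩
  · rintro ⟨⟨hcat, hav⟩, hlast, p, hp, h1, h2⟩
    refine ⟨⟨⟨hcat, hav⟩, by omega⟩, ?_⟩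
    rw [contains_app_iff hav (by omega)]
    exact ⟨p, hp, h1, by omega⟩


lemma kp_isdsc {M a : ℕ} (hM : 0 < M) (ha2 : 2 ≤ a) {u : Fin M → ℕ}
    (hu : u ∈ Badset M a hM) : Dsc M a u (kp M a u) := by
  obtain ⟨-, -, p, hd⟩ := (bad_char hM ha2).mp hu
  exact Nat.findGreatest_spec (by obtain ⟨hp, -⟩ := hd; omega) hd

lemma kp_greatest (M a : ℕ) (u : Fin M → ℕ) : ∀ q, kp M a u < q → ¬ Dsc M a u q := by
  intro q hq hd
  obtain ⟨hp, -⟩ := id hd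
  exact Nat.findGreatest_is_greatest hq (by omega) hd

lemma bad_suffix_mono {M a : ℕ} (hM : 0 < M) (ha2 : 2 ≤ a) {u : Fin M → ℕ}
    (hu : u ∈ Badset M a hM) :
    ∀ q, kp M a u + 1 ≤ q → ∀ hq : q + 1 < M, u ⟨q, by omega⟩ ≤ u ⟨q + 1, hq⟩ := by
  obtain ⟨⟨hcat, hav⟩, hlast, -⟩ := (bad_char hM ha2).mp hu
  obtain ⟨hp, hd1, hd2⟩ := kp_isdsc hM ha2 hu
  intro q hq1 hq
  by_contra hc
  push_neg at hc
  have hqb : u ⟨q, by omega⟩ ≤ a - 1 := by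
    rcases eq_or_lt_of_le hq1 with he | hl
    · have : u ⟨q, by omega⟩ = u ⟨kp M a u + 1, hp⟩ := wcongr u _ _ he.symm
      omega
    · have := avoid_descent_bound hav hp hd1 hl (by omega)
      omega
  by_cases hqa : u ⟨q, by omega⟩ = a - 1
  · exact kp_greatest M a u q (by omega) ⟨hq, hc, hqa⟩
  · have hne : q + 1 ≠ M - 1 := by
      intro he
      have : u ⟨M - 1, by omega⟩ = u ⟨q + 1, hq⟩ := wcongr u _ _ he.symm
      omega
    have := avoid_descent_bound hav hq hc (k := M - 1) (by omega) (by omega)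
    omega

lemma kp_lb {M a : ℕ} (hM : 0 < M) (ha2 : 2 ≤ a) {u : Fin M → ℕ}
    (hu : u ∈ Badset M a hM) (hcat : IsCatalanWord u) : a - 2 ≤ kp M a u := by
  obtain ⟨hp, -, hd2⟩ := kp_isdsc hM ha2 hu
  have := catalan_bound hcat (kp M a u) (by omega)
  omega


lemma part3_image {M a : ℕ} (hM : 0 < M) (ha2 : 2 ≤ a) :
    Sset (M + 1) a = app a '' (Bset M a hM \ Badset M a hM) := by
  ext w
  simp only [Set.mem_image, Set.mem_diff, Badset, Bset, Sset, Set.mem_setOf_eq]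
  constructor
  · rintro ⟨hw, hav, h0, hl⟩
    have hwM : w ⟨M, by omega⟩ = a := by
      have : w ⟨M + 1 - 1, by omega⟩ = w ⟨M, by omega⟩ := wcongr w _ _ (by omega)
      omega
    have happ : app a (res w) = w := app_res a w hwM
    refine ⟨res w, ⟨⟨⟨res_catalan hM hw, res_avoid hav⟩, ?_⟩, ?_⟩, happ⟩
    · show a - 1 ≤ w ⟨M - 1, by omega⟩
      have hst := hw.2.2 (M - 1) (by omega : M - 1 + 1 < M + 1)
      have he : w ⟨M - 1 + 1, by omega⟩ = w ⟨M, by omega⟩ := wcongr w _ _ (by omega)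
      omega
    · rintro ⟨-, hcon⟩
      rw [happ] at hcon
      exact hav hcon
  · rintro ⟨u, ⟨⟨⟨hu, hav⟩, hlb⟩, hnb⟩, rfl⟩
    have hnotcon : ¬ Contains21_3 (app a u) := fun hcon => hnb ⟨⟨⟨hu, hav⟩, hlb⟩, hcon⟩
    refine ⟨⟨?_, ?_, ?_⟩, hnotcon, by omega, ?_⟩
    · intro i
      by_cases h : i.1 < M
      · rw [show i = ⟨i.1, i.2⟩ from rfl, app_lt a u h]; exact hu.1 _
      · rw [show i = ⟨i.1, i.2⟩ from rfl, app_last a u h]; omega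
    · intro h
      rw [app_lt a u hM]
      exact hu.2.1 hM
    · intro i h
      by_cases h2 : i + 1 < M
      · rw [app_lt a u h2, app_lt a u (by omega)]
        exact hu.2.2 i h2
      · rw [app_last a u h2, app_lt a u (by omega : i < M)]
        have : u ⟨i, by omega⟩ = u ⟨M - 1, by omega⟩ := wcongr u _ _ (by omega)
        omega
    · rw [app_last a u (by omega : ¬ (M + 1 - 1 < M))]


lemma Bset_finite {M a : ℕ} (hM : 0 < M) : (Bset M a hM).Finite :=
  finite_aux _ (fun _ hw => hw.1.1)

lemma Badset_sub {M a : ℕ} (hM : 0 < M) : Badset M a hM ⊆ Bset M a hM := fun _ hu => hu.1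

lemma part3_count {M a : ℕ} (hM : 0 < M) (ha2 : 2 ≤ a) :
    (v (M + 1) a : ℤ) = ((Bset M a hM).ncard : ℤ) - ((Badset M a hM).ncard : ℤ) := by
  have hBfin := Bset_finite (a := a) hM
  have hsub := Badset_sub (a := a) hM
  have hBadfin := hBfin.subset hsub
  rw [v_eq]
  rw [show Sset (M + 1) a = app a '' (Bset M a hM \ Badset M a hM) from part3_image hM ha2]
  rw [Set.ncard_image_of_injOn (app_injOn a _), Set.ncard_diff hsub hBadfin,
    Nat.cast_sub (Set.ncard_le_ncard hsub hBfin)]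

lemma Bset_count {M a : ℕ} (hM : 0 < M) (ha2 : 2 ≤ a) :
    (Bset M a hM).ncard = ∑ j ∈ Icc (a - 1) M, v M j :=
  ncard_lastbound M (a - 1) hM (by omega)


/-- totalization of a word, for decidable predicates -/
def uv {M : ℕ} (u : Fin M → ℕ) (i : ℕ) : ℕ := if h : i < M then u ⟨i, h⟩ else 0

lemma uv_eq {M : ℕ} (u : Fin M → ℕ) {i : ℕ} (h : i < M) : uv u i = u ⟨i, h⟩ := dif_pos h

lemma catalan_uv {M : ℕ} (u : Fin M → ℕ) :
    IsCatalanWord u ↔ (∀ i, i < M → 1 ≤ uv u i) ∧ (0 < M → uv u 0 = 1) ∧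
      (∀ i, i + 1 < M → uv u (i + 1) ≤ uv u i + 1) := by
  constructor
  · rintro ⟨h1, h2, h3⟩
    refine ⟨fun i hi => ?_, fun h => ?_, fun i hi => ?_⟩
    · rw [uv_eq u hi]; exact h1 _
    · rw [uv_eq u h]; exact h2 h
    · rw [uv_eq u hi, uv_eq u (by omega : i < M)]; exact h3 i hi
  · rintro ⟨h1, h2, h3⟩
    refine ⟨fun i => ?_, fun h => ?_, fun i hi => ?_⟩
    · have := h1 i.1 i.2
      rwa [uv_eq u i.2] at this
    · have := h2 h
      rwa [uv_eq u h] at this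
    · have := h3 i hi
      rwa [uv_eq u hi, uv_eq u (by omega : i < M)] at this

lemma contains_uv {M : ℕ} (u : Fin M → ℕ) :
    Contains21_3 u ↔ ∃ i k, k < M ∧ i + 1 < k ∧ uv u (i + 1) < uv u i ∧ uv u i < uv u k := by
  constructor
  · rintro ⟨i, k, hk, hik, h1, h2⟩
    refine ⟨i, k, hk, hik, ?_, ?_⟩
    · rwa [uv_eq u (show i + 1 < M by omega), uv_eq u (show i < M by omega)]
    · rwa [uv_eq u (show i < M by omega), uv_eq u hk]
  · rintro ⟨i, k, hk, hik, h1, h2⟩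
    refine ⟨i, k, hk, hik, ?_, ?_⟩
    · rwa [← uv_eq u (show i + 1 < M by omega), ← uv_eq u (show i < M by omega)]
    · rwa [← uv_eq u (show i < M by omega), ← uv_eq u hk]

lemma dsc_uv {M a : ℕ} (u : Fin M → ℕ) (p : ℕ) :
    Dsc M a u p ↔ p + 1 < M ∧ uv u (p + 1) < uv u p ∧ uv u p = a - 1 := by
  constructor
  · rintro ⟨hp, h1, h2⟩
    refine ⟨hp, ?_, ?_⟩
    · rwa [uv_eq u hp, uv_eq u (show p < M by omega)]
    · rwa [uv_eq u (show p < M by omega)]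
  · rintro ⟨hp, h1, h2⟩
    refine ⟨hp, ?_, ?_⟩
    · rwa [← uv_eq u hp, ← uv_eq u (show p < M by omega)]
    · rwa [← uv_eq u (show p < M by omega)]

lemma sset_uv {M b : ℕ} (u : Fin M → ℕ) :
    u ∈ Sset M b ↔ IsCatalanWord u ∧ ¬ Contains21_3 u ∧ 0 < M ∧ uv u (M - 1) = b := by
  constructor
  · rintro ⟨h1, h2, h3, h4⟩
    exact ⟨h1, h2, h3, by rwa [uv_eq u (by omega : M - 1 < M)]⟩
  · rintro ⟨h1, h2, h3, h4⟩
    refine ⟨h1, h2, h3, ?_⟩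
    rwa [← uv_eq u (by omega : M - 1 < M)]

lemma bad_char_uv {M a : ℕ} (hM : 0 < M) (ha2 : 2 ≤ a) {u : Fin M → ℕ} :
    u ∈ Badset M a hM ↔ (IsCatalanWord u ∧ ¬ Contains21_3 u) ∧
      uv u (M - 1) = a - 1 ∧ ∃ p, Dsc M a u p := by
  rw [bad_char hM ha2, uv_eq u (by omega : M - 1 < M)]

lemma bad_suffix_mono_uv {M a : ℕ} (hM : 0 < M) (ha2 : 2 ≤ a) {u : Fin M → ℕ}
    (hu : u ∈ Badset M a hM) :
    ∀ q, kp M a u + 1 ≤ q → q + 1 < M → uv u q ≤ uv u (q + 1) := by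
  intro q h1 h2
  rw [uv_eq u (show q < M by omega), uv_eq u h2]
  exact bad_suffix_mono hM ha2 hu q h1 h2

def cut {M : ℕ} (L : ℕ) (hL : L ≤ M) (u : Fin M → ℕ) : Fin L → ℕ :=
  fun i => u ⟨i.1, by omega⟩

lemma cut_catalan {M L : ℕ} (hL : 0 < L) (hLM : L ≤ M) {u : Fin M → ℕ}
    (hu : IsCatalanWord u) : IsCatalanWord (cut L hLM u) :=
  restrict_catalan' (M := M) (L := L) hL hLM (w := u) hu

lemma cut_avoid {M L : ℕ} (hLM : L ≤ M) {u : Fin M → ℕ} (hu : ¬ Contains21_3 u) :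
    ¬ Contains21_3 (cut L hLM u) :=
  restrict_avoid' (M := M) (L := L) hLM (w := u) hu

def keymap (M a : ℕ) (u : Fin M → ℕ) : ℕ × ℕ := (M - kp M a u, uv u (kp M a u + 1))

def theta (M m j' : ℕ) (Sx : Finset ℕ × (Fin (M + 1 - m) → ℕ)) : Fin M → ℕ :=
  fun i => if h : i.1 < M + 1 - m then Sx.2 ⟨i.1, h⟩
    else j' + (Sx.1.filter (· < i.1 - (M + 1 - m))).card

lemma theta_lt (M m j' : ℕ) (Sx : Finset ℕ × (Fin (M + 1 - m) → ℕ)) {i : ℕ}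
    (h : i < M + 1 - m) (h' : i < M) : theta M m j' Sx ⟨i, h'⟩ = Sx.2 ⟨i, h⟩ := dif_pos h

lemma theta_suffix (M m j' : ℕ) (Sx : Finset ℕ × (Fin (M + 1 - m) → ℕ)) {t : ℕ}
    (h' : M + 1 - m + t < M) :
    theta M m j' Sx ⟨M + 1 - m + t, h'⟩ = j' + (Sx.1.filter (· < t)).card := by
  have h : ¬ (M + 1 - m + t < M + 1 - m) := by omega
  show (if h : M + 1 - m + t < M + 1 - m then _ else
    j' + (Sx.1.filter (· < M + 1 - m + t - (M + 1 - m))).card) = _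
  have hi : M + 1 - m + t - (M + 1 - m) = t := by omega
  rw [dif_neg h, hi]

lemma filter_lt_zero (S : Finset ℕ) : S.filter (· < 0) = ∅ := by
  apply Finset.filter_false_of_mem
  intro x _
  omega

lemma filter_lt_full {S : Finset ℕ} {c : ℕ} (hS : S ⊆ Finset.range c) :
    S.filter (· < c) = S := by
  apply Finset.filter_true_of_mem
  intro x hx
  exact Finset.mem_range.mp (hS hx)


lemma theta_lt' (M m j' : ℕ) (S : Finset ℕ) (x : Fin (M + 1 - m) → ℕ) {i : ℕ}
    (h : i < M + 1 - m) (h' : i < M) : theta M m j' (S, x) ⟨i, h'⟩ = x ⟨i, h⟩ :=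
  theta_lt M m j' (S, x) h h'

lemma theta_suffix' (M m j' : ℕ) (S : Finset ℕ) (x : Fin (M + 1 - m) → ℕ) {t : ℕ}
    (h' : M + 1 - m + t < M) :
    theta M m j' (S, x) ⟨M + 1 - m + t, h'⟩ = j' + (S.filter (· < t)).card :=
  theta_suffix M m j' (S, x) h'

lemma theta_mem {M a m j' : ℕ} (hM : 0 < M) (ha2 : 2 ≤ a) (haM : a ≤ M + 1)
    (hm2 : 2 ≤ m) (hmu : m ≤ M + 2 - a) (hj1 : 1 ≤ j') (hju : j' ≤ a - 2)
    {S : Finset ℕ} (hS : S ⊆ Finset.range (m - 2)) (hScard : S.card = a - 1 - j')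
    {x : Fin (M + 1 - m) → ℕ} (hx : x ∈ Sset (M + 1 - m) (a - 1)) :
    theta M m j' (S, x) ∈ Badset M a hM ∧ keymap M a (theta M m j' (S, x)) = (m, j') := by
  rw [sset_uv] at hx
  obtain ⟨hxcat, hxav, hx0, hxl⟩ := hx
  rw [catalan_uv] at hxcat
  obtain ⟨hxpos, hxfirst, hxstep⟩ := hxcat
  have hLa : a - 1 ≤ M + 1 - m := by omega
  have hLM : M + 1 - m < M := by omega
  set w := theta M m j' (S, x) with hwdef
  have hpre : ∀ i, i < M + 1 - m → uv w i = uv x i := by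
    intro i h
    rw [uv_eq w (show i < M from by omega), uv_eq x h, hwdef]
    exact theta_lt' M m j' S x h _
  have hsuf : ∀ i, M + 1 - m ≤ i → i < M →
      uv w i = j' + (S.filter (· < i - (M + 1 - m))).card := by
    intro i h1 h2
    have e : i = M + 1 - m + (i - (M + 1 - m)) := by omega
    rw [uv_eq w h2, wcongr w h2 (show M + 1 - m + (i - (M + 1 - m)) < M from by omega) e, hwdef]
    exact theta_suffix' M m j' S x _
  have hsufb : ∀ t, (S.filter (· < t)).card ≤ a - 1 - j' :=
    fun t => hScard ▸ Finset.card_filter_le S _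
  have hval1 : uv w (M + 1 - m - 1) = a - 1 := by
    rw [hpre _ (by omega)]; exact hxl
  have hval2 : uv w (M + 1 - m) = j' := by
    rw [hsuf (M + 1 - m) le_rfl hLM, show M + 1 - m - (M + 1 - m) = 0 from by omega,
      filter_lt_zero S]
    simp
  have hlastw : uv w (M - 1) = a - 1 := by
    rw [hsuf (M - 1) (by omega) (by omega), show M - 1 - (M + 1 - m) = m - 2 from by omega,
      filter_lt_full hS, hScard]
    omega
  have hsufstep : ∀ i, M + 1 - m ≤ i → i + 1 < M →
      uv w (i + 1) = uv w i + (if i - (M + 1 - m) ∈ S then 1 else 0) := by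
    intro i h1 h2
    rw [hsuf (i + 1) (by omega) h2, hsuf i h1 (by omega),
      show i + 1 - (M + 1 - m) = (i - (M + 1 - m)) + 1 from by omega, card_filter_lt_succ]
    omega
  have hcat : IsCatalanWord w := by
    rw [catalan_uv]
    refine ⟨?_, ?_, ?_⟩
    · intro i hi
      by_cases h : i < M + 1 - m
      · rw [hpre i h]; exact hxpos i h
      · rw [hsuf i (by omega) hi]; omega
    · intro h
      rw [hpre 0 (by omega)]; exact hxfirst (by omega)
    · intro i hi
      by_cases h1 : i + 1 < M + 1 - m
      · rw [hpre (i + 1) h1, hpre i (by omega)]; exact hxstep i h1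
      · by_cases h2 : i + 1 = M + 1 - m
        · have e1 : uv w (i + 1) = j' := by rw [h2]; exact hval2
          have e2 : uv w i = a - 1 := by
            rw [show i = M + 1 - m - 1 from by omega]; exact hval1
          omega
        · rw [hsufstep i (by omega) hi]
          split <;> omega
  have hav : ¬ Contains21_3 w := by
    rw [contains_uv]
    rintro ⟨i, k, hk, hik, hd1, hd2⟩
    by_cases hiL : M + 1 - m ≤ i
    · rw [hsufstep i hiL (by omega)] at hd1
      split at hd1 <;> omega
    · push_neg at hiL
      by_cases hiB : i + 1 = M + 1 - m
      · have e2 : uv w i = a - 1 := by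
          rw [show i = M + 1 - m - 1 from by omega]; exact hval1
        have e3 := hsuf k (by omega) hk
        have := hsufb (k - (M + 1 - m))
        omega
      · rw [hpre (i + 1) (by omega), hpre i (by omega)] at hd1
        rw [hpre i (by omega)] at hd2
        by_cases hkL : k < M + 1 - m
        · rw [hpre k hkL] at hd2
          exact hxav ((contains_uv x).mpr ⟨i, k, hkL, hik, hd1, hd2⟩)
        · rw [hsuf k (by omega) hk] at hd2
          have hbk := hsufb (k - (M + 1 - m))
          by_cases hi2 : i + 1 = M + 1 - m - 1
          · have : uv x (i + 1) = a - 1 := by rw [hi2]; exact hxl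
            omega
          · refine hxav ((contains_uv x).mpr ⟨i, M + 1 - m - 1, by omega, by omega, hd1, ?_⟩)
            rw [hxl]
            omega
  have hdsc : Dsc M a w (M + 1 - m - 1) := by
    rw [dsc_uv]
    refine ⟨by omega, ?_, hval1⟩
    have e1 : uv w (M + 1 - m - 1 + 1) = j' := by
      rw [show M + 1 - m - 1 + 1 = M + 1 - m from by omega]; exact hval2
    omega
  have hmem : w ∈ Badset M a hM :=
    (bad_char_uv hM ha2).mpr ⟨⟨hcat, hav⟩, hlastw, ⟨M + 1 - m - 1, hdsc⟩⟩
  refine ⟨hmem, ?_⟩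
  have hkp : kp M a w = M + 1 - m - 1 := by
    show Nat.findGreatest (Dsc M a w) M = M + 1 - m - 1
    rw [Nat.findGreatest_eq_iff]
    refine ⟨by omega, fun _ => hdsc, ?_⟩
    intro q hq1 hq2 hdq
    rw [dsc_uv] at hdq
    obtain ⟨hqp, hqd, -⟩ := hdq
    rw [hsufstep q (by omega) hqp] at hqd
    split at hqd <;> omega
  show (M - kp M a w, uv w (kp M a w + 1)) = (m, j')
  rw [hkp, show M + 1 - m - 1 + 1 = M + 1 - m from by omega, hval2, Prod.mk.injEq]
  exact ⟨by omega, rfl⟩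


lemma uv_cut {M L : ℕ} (hL : L ≤ M) (u : Fin M → ℕ) {i : ℕ} (h : i < L) :
    uv (cut L hL u) i = uv u i := by
  rw [uv_eq (cut L hL u) h, uv_eq u (by omega : i < M)]
  rfl

lemma key_bounds {M a : ℕ} (hM : 0 < M) (ha2 : 2 ≤ a) (haM : a ≤ M + 1) {u : Fin M → ℕ}
    (hu : u ∈ Badset M a hM) :
    keymap M a u ∈ (Icc 2 (M + 2 - a)) ×ˢ (Icc 1 (a - 2)) := by
  obtain ⟨⟨hcat, hav⟩, hlast, -⟩ := (bad_char_uv hM ha2).mp hu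
  have hdsc := kp_isdsc hM ha2 hu
  rw [dsc_uv] at hdsc
  obtain ⟨hp1, hp2, hp3⟩ := hdsc
  have hlb := kp_lb hM ha2 hu hcat
  rw [catalan_uv] at hcat
  have hpos := hcat.1 (kp M a u + 1) (by omega)
  rw [Finset.mem_product, Finset.mem_Icc, Finset.mem_Icc]
  show (2 ≤ M - kp M a u ∧ M - kp M a u ≤ M + 2 - a) ∧
    (1 ≤ uv u (kp M a u + 1) ∧ uv u (kp M a u + 1) ≤ a - 2)
  omega

lemma bad_decomp {M a m j' : ℕ} (hM : 0 < M) (ha2 : 2 ≤ a) (haM : a ≤ M + 1) {u : Fin M → ℕ}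
    (hu : u ∈ Badset M a hM) (hkey : keymap M a u = (m, j')) :
    ∃ S x, (S ∈ Finset.powersetCard (a - 1 - j') (Finset.range (m - 2))) ∧
      x ∈ Sset (M + 1 - m) (a - 1) ∧ theta M m j' (S, x) = u := by
  classical
  obtain ⟨⟨hcat, hav⟩, hlast, -⟩ := (bad_char_uv hM ha2).mp hu
  have hdsc := kp_isdsc hM ha2 hu
  rw [dsc_uv] at hdsc
  obtain ⟨hp1, hp2, hp3⟩ := hdsc
  have hlb := kp_lb hM ha2 hu hcat
  have hcat' := hcat
  rw [catalan_uv] at hcat'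
  obtain ⟨hpos, hfirst, hstep⟩ := hcat'
  have hmono := bad_suffix_mono_uv hM ha2 hu
  have hm : M - kp M a u = m := congrArg Prod.fst hkey
  have hj : uv u (kp M a u + 1) = j' := congrArg Prod.snd hkey
  set p := kp M a u with hpdef
  have hm2 : 2 ≤ m := by omega
  have hmM : m ≤ M := by omega
  have hL : M + 1 - m = p + 1 := by omega
  have hj1 : 1 ≤ j' := by have := hpos (p + 1) (by omega); omega
  have hju : j' ≤ a - 2 := by omega
  set S : Finset ℕ :=
    (Finset.range (m - 2)).filter (fun t => uv u (p + 1 + t) < uv u (p + 1 + t + 1)) with hSdef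
  have hSsub : S ⊆ Finset.range (m - 2) := Finset.filter_subset _ _
  have hlast' : uv u (p + 1 + (m - 2)) = a - 1 := by
    rw [show p + 1 + (m - 2) = M - 1 from by omega]
    exact hlast
  have htel : ∀ t, t ≤ m - 2 → uv u (p + 1 + t) = j' + (S.filter (· < t)).card := by
    intro t
    induction t with
    | zero =>
      intro _
      rw [filter_lt_zero S]
      simpa using hj
    | succ t ih =>
      intro ht
      have ih' := ih (by omega)
      have hstep1 : uv u (p + 1 + t + 1) ≤ uv u (p + 1 + t) + 1 := hstep _ (by omega)
      have hmono1 : uv u (p + 1 + t) ≤ uv u (p + 1 + t + 1) := hmono _ (by omega) (by omega)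
      have hSmem : t ∈ S ↔ uv u (p + 1 + t) < uv u (p + 1 + t + 1) := by
        rw [hSdef, Finset.mem_filter, Finset.mem_range]
        exact ⟨fun h => h.2, fun h => ⟨by omega, h⟩⟩
      rw [show p + 1 + (t + 1) = p + 1 + t + 1 from by omega, card_filter_lt_succ]
      by_cases hmem : t ∈ S
      · rw [if_pos hmem]
        have := hSmem.mp hmem
        omega
      · rw [if_neg hmem]
        have : ¬ (uv u (p + 1 + t) < uv u (p + 1 + t + 1)) := fun h => hmem (hSmem.mpr h)
        omega
  have hScard : S.card = a - 1 - j' := by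
    have h1 := htel (m - 2) le_rfl
    rw [filter_lt_full hSsub] at h1
    omega
  refine ⟨S, cut (M + 1 - m) (by omega) u, ?_, ?_, ?_⟩
  · rw [Finset.mem_powersetCard]
    exact ⟨hSsub, hScard⟩
  · rw [sset_uv]
    refine ⟨cut_catalan (by omega) (by omega) hcat, cut_avoid (by omega) hav, by omega, ?_⟩
    rw [uv_cut (by omega) u (by omega : M + 1 - m - 1 < M + 1 - m),
      show M + 1 - m - 1 = p from by omega]
    exact hp3
  · funext i
    by_cases h : i.1 < M + 1 - m
    · rw [show i = ⟨i.1, i.2⟩ from rfl, theta_lt' M m j' S _ h i.2]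
      rfl
    · have e : i = ⟨M + 1 - m + (i.1 - (M + 1 - m)), by omega⟩ := Fin.ext (by simp; omega)
      rw [e, theta_suffix' M m j' S _ (by omega)]
      have h2 := htel (i.1 - (M + 1 - m)) (by omega)
      rw [show p + 1 + (i.1 - (M + 1 - m)) = M + 1 - m + (i.1 - (M + 1 - m)) from by omega,
        uv_eq u (by omega : M + 1 - m + (i.1 - (M + 1 - m)) < M)] at h2
      exact h2.symm

lemma theta_injOn {M a m j' : ℕ} (hm2 : 2 ≤ m) :
    Set.InjOn (theta M m j')
      (↑(Finset.powersetCard (a - 1 - j') (Finset.range (m - 2))) ×ˢ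
        Sset (M + 1 - m) (a - 1)) := by
  rintro ⟨S, x⟩ hSx ⟨S', x'⟩ hSx' h
  have hmM : m ≤ M := by
    obtain ⟨-, -, hL, -⟩ := hSx.2
    omega
  have hx : x = x' := by
    funext i
    have h0 := congrFun h ⟨i.1, by omega⟩
    rw [theta_lt' M m j' S x i.2 (by omega), theta_lt' M m j' S' x' i.2 (by omega)] at h0
    exact h0
  obtain rfl := hx
  have hSsub : S ⊆ Finset.range (m - 2) := by
    have := hSx.1
    rw [Finset.mem_coe, Finset.mem_powersetCard] at this
    exact this.1
  have hSsub' : S' ⊆ Finset.range (m - 2) := by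
    have := hSx'.1
    rw [Finset.mem_coe, Finset.mem_powersetCard] at this
    exact this.1
  have hS : S = S' := by
    have hv : ∀ T : Finset ℕ, ∀ t, ∀ ht2 : t < m - 2,
        (t ∈ T ↔ theta M m j' (T, x) ⟨M + 1 - m + (t + 1), by omega⟩ =
          theta M m j' (T, x) ⟨M + 1 - m + t, by omega⟩ + 1) := by
      intro T t ht
      rw [theta_suffix' M m j' T x (by omega), theta_suffix' M m j' T x (by omega),
        card_filter_lt_succ]
      by_cases hmem : t ∈ T
      · rw [if_pos hmem]
        exact ⟨fun _ => by omega, fun _ => hmem⟩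
      · rw [if_neg hmem]
        exact ⟨fun hc => absurd hc hmem, fun hc => by omega⟩
    ext t
    by_cases ht : t < m - 2
    · rw [hv S t ht, hv S' t ht, h]
    · constructor
      · intro hc
        exact absurd (Finset.mem_range.mp (hSsub hc)) ht
      · intro hc
        exact absurd (Finset.mem_range.mp (hSsub' hc)) ht
  rw [hS]


lemma fiber_eq {M a m j' : ℕ} (hM : 0 < M) (ha2 : 2 ≤ a) (haM : a ≤ M + 1)
    (hm2 : 2 ≤ m) (hmu : m ≤ M + 2 - a) (hj1 : 1 ≤ j') (hju : j' ≤ a - 2) :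
    {u : Fin M → ℕ | u ∈ Badset M a hM ∧ keymap M a u = (m, j')} =
      theta M m j' '' (↑(Finset.powersetCard (a - 1 - j') (Finset.range (m - 2))) ×ˢ
        Sset (M + 1 - m) (a - 1)) := by
  ext u
  simp only [Set.mem_setOf_eq, Set.mem_image, Set.mem_prod, Finset.mem_coe]
  constructor
  · rintro ⟨hu, hkey⟩
    obtain ⟨S, x, hS, hx, heq⟩ := bad_decomp hM ha2 haM hu hkey
    exact ⟨(S, x), ⟨hS, hx⟩, heq⟩
  · rintro ⟨⟨S, x⟩, ⟨hS, hx⟩, rfl⟩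
    obtain ⟨hSsub, hScard⟩ := Finset.mem_powersetCard.mp hS
    exact theta_mem hM ha2 haM hm2 hmu hj1 hju hSsub hScard hx

lemma prod_card (M a m j' : ℕ) :
    (((Finset.powersetCard (a - 1 - j') (Finset.range (m - 2)) : Finset (Finset ℕ)) :
      Set (Finset ℕ)) ×ˢ Sset (M + 1 - m) (a - 1)).ncard
      = (m - 2).choose (a - 1 - j') * v (M + 1 - m) (a - 1) := by
  classical
  have hfin := Sset_finite (M + 1 - m) (a - 1)
  have he : (((Finset.powersetCard (a - 1 - j') (Finset.range (m - 2)) : Finset (Finset ℕ)) :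
      Set (Finset ℕ)) ×ˢ Sset (M + 1 - m) (a - 1))
      = ↑((Finset.powersetCard (a - 1 - j') (Finset.range (m - 2))) ×ˢ hfin.toFinset) := by
    rw [Finset.coe_product, Set.Finite.coe_toFinset]
  rw [he, Set.ncard_coe_finset, Finset.card_product, Finset.card_powersetCard,
    Finset.card_range, v_eq, Set.ncard_eq_toFinset_card _ hfin]

lemma bad_count {M a : ℕ} (hM : 0 < M) (ha2 : 2 ≤ a) (haM : a ≤ M + 1) :
    (Badset M a hM).ncard = ∑ q ∈ (Icc 2 (M + 2 - a)) ×ˢ (Icc 1 (a - 2)),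
      (q.1 - 2).choose (a - 1 - q.2) * v (M + 1 - q.1) (a - 1) := by
  classical
  have hfin : (Badset M a hM).Finite := (Bset_finite hM).subset (Badset_sub hM)
  rw [Set.ncard_eq_toFinset_card _ hfin]
  have hmem : ∀ u ∈ hfin.toFinset, keymap M a u ∈ (Icc 2 (M + 2 - a)) ×ˢ (Icc 1 (a - 2)) :=
    fun u hu => key_bounds hM ha2 haM (hfin.mem_toFinset.mp hu)
  rw [Finset.card_eq_sum_card_fiberwise hmem]
  refine Finset.sum_congr rfl fun q hq => ?_
  obtain ⟨m, j'⟩ := q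
  rw [Finset.mem_product, Finset.mem_Icc, Finset.mem_Icc] at hq
  dsimp only at hq ⊢
  have h1 : (hfin.toFinset.filter fun u => keymap M a u = (m, j')).card
      = ({u : Fin M → ℕ | u ∈ Badset M a hM ∧ keymap M a u = (m, j')} : Set _).ncard := by
    rw [← Set.ncard_coe_finset]
    congr 1
    ext u
    simp [Set.Finite.mem_toFinset]
  rw [h1, fiber_eq hM ha2 haM (by omega) (by omega) (by omega) (by omega),
    Set.ncard_image_of_injOn (theta_injOn (by omega)), prod_card]

lemma sum_algebra (M a : ℕ) (ha2 : 2 ≤ a) (haM : a ≤ M + 1) :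
    ((∑ q ∈ (Icc 2 (M + 2 - a)) ×ˢ (Icc 1 (a - 2)),
      (q.1 - 2).choose (a - 1 - q.2) * v (M + 1 - q.1) (a - 1) : ℕ) : ℤ)
      = ∑ j ∈ Icc 2 (a - 1), ∑ m ∈ Icc (j + 1) (M + 2 - a),
          ((m - 2).choose (j - 1) : ℤ) * (v (M + 1 - m) (a - 1) : ℤ) := by
  push_cast
  rw [Finset.sum_product]
  have h1 : ∀ m ∈ Icc 2 (M + 2 - a),
      (∑ j' ∈ Icc 1 (a - 2), ((m - 2).choose (a - 1 - j') : ℤ) * (v (M + 1 - m) (a - 1) : ℤ))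
      = ∑ j ∈ Icc 2 (a - 1), ((m - 2).choose (j - 1) : ℤ) * (v (M + 1 - m) (a - 1) : ℤ) := by
    intro m _
    refine Finset.sum_nbij' (fun j' => a - j') (fun j => a - j) ?_ ?_ ?_ ?_ ?_
    · intro j' hj'
      simp only [Finset.mem_Icc] at hj' ⊢
      omega
    · intro j hj
      simp only [Finset.mem_Icc] at hj ⊢
      omega
    · intro j' hj'
      simp only [Finset.mem_Icc] at hj'
      omega
    · intro j hj
      simp only [Finset.mem_Icc] at hj
      omega
    · intro j' hj'
      simp only [Finset.mem_Icc] at hj'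
      rw [show a - 1 - j' = a - j' - 1 from by omega]
  rw [Finset.sum_congr rfl h1, Finset.sum_comm]
  refine Finset.sum_congr rfl fun j hj => ?_
  rw [Finset.mem_Icc] at hj
  refine (Finset.sum_subset ?_ ?_).symm
  · intro m hm
    rw [Finset.mem_Icc] at hm ⊢
    omega
  · intro m hm hnm
    rw [Finset.mem_Icc] at hm
    rw [Finset.mem_Icc] at hnm
    have : (m - 2).choose (j - 1) = 0 := Nat.choose_eq_zero_of_lt (by omega)
    rw [this]
    push_cast
    ring

lemma main_part3 (M a : ℕ) (hM : 1 ≤ M) (ha2 : 2 ≤ a) (haM : a ≤ M + 1) :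
    (v (M + 1) a : ℤ) = (∑ j ∈ Icc (a - 1) M, (v M j : ℤ)) -
      ∑ j ∈ Icc 2 (a - 1), ∑ m ∈ Icc (j + 1) (M + 2 - a),
        ((m - 2).choose (j - 1) : ℤ) * (v (M + 1 - m) (a - 1) : ℤ) := by
  have h0 : 0 < M := hM
  rw [part3_count h0 ha2, Bset_count h0 ha2, bad_count h0 ha2 haM, sum_algebra M a ha2 haM]
  push_cast
  ring

end CW213

theorem catalan_21_3_recurrence :
    v 1 1 = 1 ∧
    (∀ n : ℕ, 2 ≤ n → v n 1 = ∑ j ∈ Finset.Icc 1 (n - 1), v (n - 1) j) ∧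
    ∀ n a : ℕ, 2 ≤ n → 2 ≤ a → a ≤ n →
      (v n a : ℤ) = (∑ j ∈ Finset.Icc (a - 1) (n - 1), (v (n - 1) j : ℤ)) -
        ∑ j ∈ Finset.Icc 2 (a - 1), ∑ m ∈ Finset.Icc (j + 1) (n - a + 1),
          (Nat.choose (m - 2) (j - 1) : ℤ) * (v (n - m) (a - 1) : ℤ) := by
  refine ⟨CW213.main_part1, ?_, ?_⟩
  · intro n hn
    obtain ⟨M, rfl⟩ : ∃ M, n = M + 1 := ⟨n - 1, by omega⟩
    have h := CW213.main_part2 M (by omega)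
    simpa using h
  · intro n a hn ha2 han
    obtain ⟨M, rfl⟩ : ∃ M, n = M + 1 := ⟨n - 1, by omega⟩
    have h := CW213.main_part3 M a (by omega) ha2 (by omega)
    have e2 : M + 1 - a + 1 = M + 2 - a := by omega
    simp only [Nat.add_sub_cancel]
    rw [e2]
    exact h
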